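/- arXiv:2505.02637 — 3 statements merged into one kernel-verified Lean document; each statement's English description precedes it below -/
import Mathlib

section
/- Let $\tilde\theta \sim N(\theta, s)$ with $s = \sigma^2/n > 0$, and let $\hat\delta = (1 - \lambda^2\sigma^2/\tilde\theta^2)_+ \tilde\theta$ be the garrotte estimator with threshold $\lambda\sigma > 0$. Then $\mathbb{E}(\hat\delta - \theta)^2 \leq \lambda^2\sigma^2 + 3s$. -/
open MeasureTheory ProbabilityTheory
open scoped NNReal ENNReal

namespace Stmt9Aux

open Real Filter Set Topology
open scoped NNReal

variable {θ : ℝ} {v : ℝ≥0}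

lemma continuous_gauss : Continuous (gaussianPDFReal θ v) := by
  unfold gaussianPDFReal
  fun_prop

lemma hasDerivAt_gauss (hv : v ≠ 0) (x : ℝ) :
    HasDerivAt (gaussianPDFReal θ v) (-((x - θ) / v) * gaussianPDFReal θ v x) x := by
  have hv' : (0:ℝ) < v := lt_of_le_of_ne v.coe_nonneg (by exact_mod_cast (Ne.symm hv))
  have h1 : HasDerivAt (fun y : ℝ => -(y - θ)^2 / (2*(v:ℝ))) (-((x - θ)/v)) x := by
    have h0 : HasDerivAt (fun y : ℝ => (y - θ)) 1 x := (hasDerivAt_id x).sub_const θ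
    have h2 := ((h0.pow 2).neg).div_const (2*(v:ℝ))
    refine h2.congr_deriv ?_
    norm_num
    field_simp
  have h3 := (h1.exp).const_mul ((√(2 * π * (v:ℝ)))⁻¹)
  rw [gaussianPDFReal_def]
  refine h3.congr_deriv ?_
  ring


lemma gauss_eq (x : ℝ) :
    gaussianPDFReal θ v x = (√(2 * π * (v:ℝ)))⁻¹ * rexp (-(2*(v:ℝ))⁻¹ * (x - θ)^2) := by
  unfold gaussianPDFReal
  rw [div_eq_mul_inv]
  ring_nf

lemma integrable_gauss : Integrable (gaussianPDFReal θ v) := integrable_gaussianPDFReal θ v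

lemma integrable_sq_gauss (hv : v ≠ 0) :
    Integrable (fun x => (x - θ)^2 * gaussianPDFReal θ v x) := by
  have hv' : (0:ℝ) < v := lt_of_le_of_ne v.coe_nonneg (by exact_mod_cast (Ne.symm hv))
  have hb : (0:ℝ) < (2*(v:ℝ))⁻¹ := by positivity
  have h : Integrable (fun y : ℝ => y ^ (2:ℝ) * rexp (-(2*(v:ℝ))⁻¹ * y^2)) :=
    integrable_rpow_mul_exp_neg_mul_sq hb (by norm_num)
  have h2 : Integrable (fun y : ℝ => y ^ (2:ℕ) * rexp (-(2*(v:ℝ))⁻¹ * y^2)) := by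
    refine h.congr (Filter.Eventually.of_forall fun y => ?_)
    have h4 : y ^ (2:ℝ) = y ^ (2:ℕ) := by
      rw [← Real.rpow_natCast y 2]; norm_num
    simp only [h4]
  have h3 := (h2.comp_sub_right θ).const_mul ((√(2 * π * (v:ℝ)))⁻¹)
  refine h3.congr (Filter.Eventually.of_forall fun x => ?_)
  simp only [gauss_eq]
  ring

lemma tendsto_exp_sq_atTop {b : ℝ} (hb : 0 < b) :
    Tendsto (fun y : ℝ => rexp (-b * y^2)) atTop (𝓝 0) := by
  apply Real.tendsto_exp_atBot.comp
  have h1 : Tendsto (fun y : ℝ => b * y^2) atTop atTop :=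
    (tendsto_pow_atTop (two_ne_zero)).const_mul_atTop hb
  simpa [neg_mul] using tendsto_neg_atBot_iff.mpr h1

lemma tendsto_mul_exp_sq_atTop {b : ℝ} (hb : 0 < b) :
    Tendsto (fun y : ℝ => y * rexp (-b * y^2)) atTop (𝓝 0) := by
  have hexp : Tendsto (fun x : ℝ => rexp (-(1/2) * x)) atTop (𝓝 0) := by
    apply Real.tendsto_exp_atBot.comp
    have h1 : Tendsto (fun x : ℝ => (1/2 : ℝ) * x) atTop atTop :=
      tendsto_id.const_mul_atTop (by norm_num)
    exact (tendsto_neg_atBot_iff.mpr h1).congr (fun x => by ring)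
  have h := (rpow_mul_exp_neg_mul_sq_isLittleO_exp_neg hb 1).tendsto_zero_of_tendsto hexp
  refine h.congr (fun y => ?_)
  rw [Real.rpow_one]

lemma tendsto_gauss_shift_atTop (hv : v ≠ 0) (p : ℝ → ℝ)
    (hp : Tendsto (fun y : ℝ => p y * rexp (-(2*(v:ℝ))⁻¹ * y^2)) atTop (𝓝 0)) :
    Tendsto (fun x : ℝ => p (x - θ) * gaussianPDFReal θ v x) atTop (𝓝 0) := by
  have h1 : Tendsto (fun x : ℝ => x - θ) atTop atTop := tendsto_atTop_add_const_right _ (-θ) tendsto_id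
  have h2 := (hp.comp h1).const_mul ((√(2 * π * (v:ℝ)))⁻¹)
  rw [mul_zero] at h2
  refine h2.congr (fun x => ?_)
  simp only [Function.comp, gauss_eq]
  ring


lemma tendsto_gauss_shift_atBot (p : ℝ → ℝ)
    (hp : Tendsto (fun y : ℝ => p (-y) * rexp (-(2*(v:ℝ))⁻¹ * y^2)) atTop (𝓝 0)) :
    Tendsto (fun x : ℝ => p (x - θ) * gaussianPDFReal θ v x) atBot (𝓝 0) := by
  have h1 : Tendsto (fun x : ℝ => -(x - θ)) atBot atTop := by
    exact tendsto_neg_atTop_iff.mpr (tendsto_atBot_add_const_right _ (-θ) tendsto_id)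
  have h2 := (hp.comp h1).const_mul ((√(2 * π * (v:ℝ)))⁻¹)
  rw [mul_zero] at h2
  refine h2.congr (fun x => ?_)
  simp only [Function.comp, neg_neg, neg_sq, gauss_eq]
  ring

/-- The correction function whose integral vanishes. -/
noncomputable def D (θ : ℝ) (v : ℝ≥0) (c : ℝ) (x : ℝ) : ℝ :=
  (if x^2 ≤ c then ((v:ℝ) - x^2 + θ^2)
   else (-(v:ℝ) + (x-θ)^2 - 2*c*(x-θ)/x - 2*(v:ℝ)*c/x^2)) * gaussianPDFReal θ v x

lemma integrable_D (hv : v ≠ 0) {t : ℝ} (ht : 0 < t) : Integrable (D θ v (t^2)) := by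
  have hv' : (0:ℝ) < v := lt_of_le_of_ne v.coe_nonneg (by exact_mod_cast (Ne.symm hv))
  set K : ℝ := 3*(v:ℝ) + t^2 + 12*θ^2 with hK
  have hmeas : AEStronglyMeasurable (D θ v (t^2)) volume := by
    apply Measurable.aestronglyMeasurable
    apply Measurable.mul _ (measurable_gaussianPDFReal θ v)
    apply Measurable.ite (measurableSet_le (by fun_prop) measurable_const) (by fun_prop)
    fun_prop
  have hB : Integrable (fun x : ℝ => K * gaussianPDFReal θ v x
      + 8 * ((x - θ)^2 * gaussianPDFReal θ v x)) :=
    (integrable_gauss.const_mul K).add ((integrable_sq_gauss hv).const_mul 8)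
  refine hB.mono' hmeas (Filter.Eventually.of_forall fun x => ?_)
  have hφ : 0 ≤ gaussianPDFReal θ v x := gaussianPDFReal_nonneg θ v x
  unfold D
  rw [Real.norm_eq_abs, abs_mul, abs_of_nonneg hφ]
  have hcoef : |if x^2 ≤ t^2 then ((v:ℝ) - x^2 + θ^2)
      else (-(v:ℝ) + (x-θ)^2 - 2*t^2*(x-θ)/x - 2*(v:ℝ)*t^2/x^2)| ≤ K + 8*(x-θ)^2 := by
    split_ifs with h
    · rw [abs_le]
      constructor <;> nlinarith [sq_nonneg (x - θ), sq_nonneg (x - 2*θ), sq_nonneg x, sq_nonneg θ]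
    · push_neg at h
      have hx2 : t^2 < x^2 := h
      have hxt : t ≤ |x| := by
        by_contra hcon
        push_neg at hcon
        have : x^2 < t^2 := by
          have h1 : |x| < t := hcon
          nlinarith [abs_nonneg x, sq_abs x]
        linarith
      have hxne : x ≠ 0 := by
        intro h0
        rw [h0] at hx2
        nlinarith
      have habs1 : |2*t^2*(x-θ)/x| ≤ t^2 + (x-θ)^2 := by
        rw [abs_div, abs_mul, abs_mul]
        have hxpos : 0 < |x| := abs_pos.mpr hxne
        rw [div_le_iff₀ hxpos]
        have h2 : |(2:ℝ)| * |t^2| = 2*t^2 := by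
          rw [abs_of_nonneg (by norm_num : (0:ℝ) ≤ 2), abs_of_nonneg (sq_nonneg t)]
        rw [h2]
        -- 2*t^2*|x-θ| ≤ (t^2 + (x-θ)^2)*|x|, using t ≤ |x| and 2*t*|x-θ| ≤ t^2 + (x-θ)^2
        have h3 : 2*t*|x - θ| ≤ t^2 + (x-θ)^2 := by
          nlinarith [sq_nonneg (t - |x - θ|), sq_abs (x - θ)]
        calc 2*t^2*|x - θ| = t * (2*t*|x-θ|) := by ring
          _ ≤ |x| * (t^2 + (x-θ)^2) := by
              apply mul_le_mul hxt h3 (by positivity) (abs_nonneg x)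
          _ = (t^2 + (x-θ)^2) * |x| := by ring
      have habs2 : |2*(v:ℝ)*t^2/x^2| ≤ 2*(v:ℝ) := by
        rw [abs_div, abs_of_nonneg (by positivity : (0:ℝ) ≤ 2*(v:ℝ)*t^2),
          abs_of_nonneg (sq_nonneg x), div_le_iff₀ (by positivity : (0:ℝ) < x^2)]
        nlinarith
      calc |(-(v:ℝ) + (x-θ)^2 - 2*t^2*(x-θ)/x - 2*(v:ℝ)*t^2/x^2)|
          ≤ |(-(v:ℝ) + (x-θ)^2)| + |2*t^2*(x-θ)/x| + |2*(v:ℝ)*t^2/x^2| := by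
            apply (abs_sub _ _).trans
            gcongr
            apply (abs_sub _ _)
        _ ≤ ((v:ℝ) + (x-θ)^2) + (t^2 + (x-θ)^2) + 2*(v:ℝ) := by
            gcongr
            all_goals first
              | exact habs1
              | exact habs2
              | (rw [abs_le]; constructor <;> nlinarith [sq_nonneg (x-θ)])
        _ ≤ K + 8*(x-θ)^2 := by nlinarith [sq_nonneg (x-θ), sq_nonneg θ]
  calc _ ≤ (K + 8*(x-θ)^2) * gaussianPDFReal θ v x := by
        apply mul_le_mul_of_nonneg_right hcoef hφ
    _ = K * gaussianPDFReal θ v x + 8 * ((x - θ)^2 * gaussianPDFReal θ v x) := by ring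


/-- Inner antiderivative. -/
noncomputable def H1 (θ : ℝ) (v : ℝ≥0) (x : ℝ) : ℝ := (v:ℝ)*(x+θ)*gaussianPDFReal θ v x

/-- Outer antiderivative. -/
noncomputable def H2 (θ : ℝ) (v : ℝ≥0) (c : ℝ) (x : ℝ) : ℝ :=
  -((v:ℝ)*(x-θ))*gaussianPDFReal θ v x + 2*(v:ℝ)*c*(gaussianPDFReal θ v x / x)

lemma hasDerivAt_H1 (hv : v ≠ 0) (x : ℝ) :
    HasDerivAt (H1 θ v) (((v:ℝ) - x^2 + θ^2) * gaussianPDFReal θ v x) x := by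
  have hv' : (0:ℝ) < v := lt_of_le_of_ne v.coe_nonneg (by exact_mod_cast (Ne.symm hv))
  have h1 : HasDerivAt (fun y : ℝ => (v:ℝ)*(y+θ)) (v:ℝ) x := by
    simpa using ((hasDerivAt_id x).add_const θ).const_mul (v:ℝ)
  have h2 := h1.mul (hasDerivAt_gauss (θ := θ) hv x)
  refine h2.congr_deriv ?_
  have hv0 : (v:ℝ) ≠ 0 := hv'.ne'
  field_simp
  ring

lemma hasDerivAt_H2 (hv : v ≠ 0) {c x : ℝ} (hx : x ≠ 0) :
    HasDerivAt (H2 θ v c)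
      ((-(v:ℝ) + (x-θ)^2 - 2*c*(x-θ)/x - 2*(v:ℝ)*c/x^2) * gaussianPDFReal θ v x) x := by
  have hv' : (0:ℝ) < v := lt_of_le_of_ne v.coe_nonneg (by exact_mod_cast (Ne.symm hv))
  have h1 : HasDerivAt (fun y : ℝ => -((v:ℝ)*(y-θ))) (-(v:ℝ)) x := by
    refine (((hasDerivAt_id x).sub_const θ).const_mul (v:ℝ)).neg.congr_deriv ?_
    ring
  have h2 := h1.mul (hasDerivAt_gauss (θ := θ) hv x)
  have h3 := ((hasDerivAt_gauss (θ := θ) hv x).div (hasDerivAt_id x) hx).const_mul (2*(v:ℝ)*c)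
  have h4 := h2.add h3
  refine h4.congr_deriv ?_
  have hv0 : (v:ℝ) ≠ 0 := hv'.ne'
  simp only [id]
  field_simp
  ring

lemma tendsto_H2_atTop (hv : v ≠ 0) (c : ℝ) : Tendsto (H2 θ v c) atTop (𝓝 0) := by
  have hv' : (0:ℝ) < v := lt_of_le_of_ne v.coe_nonneg (by exact_mod_cast (Ne.symm hv))
  have hb : (0:ℝ) < (2*(v:ℝ))⁻¹ := by positivity
  have h1 : Tendsto (fun x : ℝ => -((v:ℝ)*(x-θ))*gaussianPDFReal θ v x) atTop (𝓝 0) := by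
    have hp : Tendsto (fun y : ℝ => -((v:ℝ)*y) * rexp (-(2*(v:ℝ))⁻¹ * y^2)) atTop (𝓝 0) := by
      have := (tendsto_mul_exp_sq_atTop hb).const_mul (-(v:ℝ))
      rw [mul_zero] at this
      exact this.congr (fun y => by ring)
    exact tendsto_gauss_shift_atTop hv (fun y => -((v:ℝ)*y)) hp
  have h2 : Tendsto (fun x : ℝ => gaussianPDFReal θ v x) atTop (𝓝 0) := by
    have hp : Tendsto (fun y : ℝ => (1:ℝ) * rexp (-(2*(v:ℝ))⁻¹ * y^2)) atTop (𝓝 0) := by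
      simpa using tendsto_exp_sq_atTop hb
    simpa using tendsto_gauss_shift_atTop hv (fun _ => (1:ℝ)) hp
  have h3 : Tendsto (fun x : ℝ => 2*(v:ℝ)*c*(gaussianPDFReal θ v x / x)) atTop (𝓝 0) := by
    have := (h2.mul tendsto_inv_atTop_zero).const_mul (2*(v:ℝ)*c)
    rw [mul_zero, mul_zero] at this
    exact this.congr (fun x => by rw [div_eq_mul_inv])
  have := h1.add h3
  rw [add_zero] at this
  exact this

lemma tendsto_H2_atBot (hv : v ≠ 0) (c : ℝ) : Tendsto (H2 θ v c) atBot (𝓝 0) := by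
  have hv' : (0:ℝ) < v := lt_of_le_of_ne v.coe_nonneg (by exact_mod_cast (Ne.symm hv))
  have hb : (0:ℝ) < (2*(v:ℝ))⁻¹ := by positivity
  have h1 : Tendsto (fun x : ℝ => -((v:ℝ)*(x-θ))*gaussianPDFReal θ v x) atBot (𝓝 0) := by
    have hp : Tendsto (fun y : ℝ => -((v:ℝ)*(-y)) * rexp (-(2*(v:ℝ))⁻¹ * y^2)) atTop (𝓝 0) := by
      have := (tendsto_mul_exp_sq_atTop hb).const_mul (v:ℝ)
      rw [mul_zero] at this
      exact this.congr (fun y => by ring)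
    exact tendsto_gauss_shift_atBot (fun y => -((v:ℝ)*y)) hp
  have h2 : Tendsto (fun x : ℝ => gaussianPDFReal θ v x) atBot (𝓝 0) := by
    have hp : Tendsto (fun y : ℝ => (1:ℝ) * rexp (-(2*(v:ℝ))⁻¹ * y^2)) atTop (𝓝 0) := by
      simpa using tendsto_exp_sq_atTop hb
    simpa using tendsto_gauss_shift_atBot (θ := θ) (fun _ => (1:ℝ)) hp
  have hinv : Tendsto (fun x : ℝ => x⁻¹) atBot (𝓝 (0:ℝ)) := by
    have h4 := tendsto_inv_atTop_zero (𝕜 := ℝ)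
    have h5 : Tendsto (fun x : ℝ => -x) atBot atTop := tendsto_neg_atBot_atTop
    have h6 := (h4.comp h5).neg
    rw [neg_zero] at h6
    exact h6.congr (fun x => by simp [Function.comp, inv_neg])
  have h3 : Tendsto (fun x : ℝ => 2*(v:ℝ)*c*(gaussianPDFReal θ v x / x)) atBot (𝓝 0) := by
    have := (h2.mul hinv).const_mul (2*(v:ℝ)*c)
    rw [mul_zero, mul_zero] at this
    exact this.congr (fun x => by rw [div_eq_mul_inv])
  have := h1.add h3
  rw [add_zero] at this
  exact this

lemma integral_D_eq_zero (hv : v ≠ 0) {t : ℝ} (ht : 0 < t) :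
    ∫ x, D θ v (t^2) x = 0 := by
  have hv' : (0:ℝ) < v := lt_of_le_of_ne v.coe_nonneg (by exact_mod_cast (Ne.symm hv))
  have hInt : Integrable (D θ v (t^2)) := integrable_D hv ht
  have htne : t ≠ 0 := ne_of_gt ht
  -- boundary equalities
  have hbt : H2 θ v (t^2) t = H1 θ v t := by
    unfold H1 H2
    field_simp
    ring
  have hbt' : H2 θ v (t^2) (-t) = H1 θ v (-t) := by
    unfold H1 H2
    rw [div_neg]
    field_simp
    ring
  set D2f : ℝ → ℝ := fun x => (-(v:ℝ) + (x-θ)^2 - 2*t^2*(x-θ)/x - 2*(v:ℝ)*t^2/x^2)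
      * gaussianPDFReal θ v x with hD2f
  -- piece on Ioi t
  have hIoi : ∫ x in Ioi t, D θ v (t^2) x = 0 - H2 θ v (t^2) t := by
    have hD2 : ∀ x ∈ Ioi t, D θ v (t^2) x = D2f x := by
      intro x hx
      have hx' : t < x := hx
      have hc : ¬ (x^2 ≤ t^2) := by nlinarith
      unfold D
      rw [if_neg hc]
    rw [setIntegral_congr_fun measurableSet_Ioi hD2]
    refine integral_Ioi_of_hasDerivAt_of_tendsto (f := H2 θ v (t^2)) (f' := D2f) (m := 0)
      ?_ ?_ ?_ ?_
    · exact (hasDerivAt_H2 hv htne).continuousAt.continuousWithinAt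
    · intro x hx
      have hx0 : x ≠ 0 := (ht.trans hx).ne'
      exact hasDerivAt_H2 hv hx0
    · exact hInt.integrableOn.congr_fun hD2 measurableSet_Ioi
    · exact tendsto_H2_atTop hv _
  -- piece on Iic (-t)
  have hIic : ∫ x in Iic (-t), D θ v (t^2) x = H2 θ v (t^2) (-t) - 0 := by
    have hD2 : ∀ x ∈ Iio (-t), D θ v (t^2) x = D2f x := by
      intro x hx
      have hx' : x < -t := hx
      have hc : ¬ (x^2 ≤ t^2) := by nlinarith
      unfold D
      rw [if_neg hc]
    have hIntOn : IntegrableOn D2f (Iic (-t)) := by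
      have h1 : IntegrableOn D2f (Iio (-t)) :=
        hInt.integrableOn.congr_fun hD2 measurableSet_Iio
      rwa [integrableOn_Iic_iff_integrableOn_Iio]
    have key : ∫ x in Iic (-t), D2f x = H2 θ v (t^2) (-t) - 0 := by
      refine integral_Iic_of_hasDerivAt_of_tendsto (f := H2 θ v (t^2)) (f' := D2f) (m := 0)
        ?_ ?_ hIntOn ?_
      · have hne : (-t : ℝ) ≠ 0 := by simpa using htne
        exact (hasDerivAt_H2 hv hne).continuousAt.continuousWithinAt
      · intro x hx
        have hx0 : x ≠ 0 := ((hx : x < -t).trans (by linarith)).ne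
        exact hasDerivAt_H2 hv hx0
      · exact tendsto_H2_atBot hv _
    calc ∫ x in Iic (-t), D θ v (t^2) x
        = ∫ x in Iio (-t), D θ v (t^2) x := integral_Iic_eq_integral_Iio
      _ = ∫ x in Iio (-t), D2f x := setIntegral_congr_fun measurableSet_Iio hD2
      _ = ∫ x in Iic (-t), D2f x := integral_Iic_eq_integral_Iio.symm
      _ = H2 θ v (t^2) (-t) - 0 := key
  -- middle piece
  have hMid : ∫ x in (-t)..t, D θ v (t^2) x = H1 θ v t - H1 θ v (-t) := by
    apply intervalIntegral.integral_eq_sub_of_hasDerivAt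
    · intro x hx
      rw [Set.uIcc_of_le (by linarith : -t ≤ t)] at hx
      have h1 : x^2 ≤ t^2 := by
        rcases hx with ⟨h2, h3⟩
        nlinarith
      have : D θ v (t^2) x = ((v:ℝ) - x^2 + θ^2) * gaussianPDFReal θ v x := by
        unfold D
        rw [if_pos h1]
      rw [this]
      exact hasDerivAt_H1 hv x
    · exact hInt.intervalIntegrable
  have hsplit1 : (∫ x in Iic t, D θ v (t^2) x) + ∫ x in Ioi t, D θ v (t^2) x
      = ∫ x, D θ v (t^2) x :=
    intervalIntegral.integral_Iic_add_Ioi hInt.integrableOn hInt.integrableOn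
  have hsplit2 : (∫ x in Iic t, D θ v (t^2) x) - ∫ x in Iic (-t), D θ v (t^2) x
      = ∫ x in (-t)..t, D θ v (t^2) x :=
    intervalIntegral.integral_Iic_sub_Iic hInt.integrableOn hInt.integrableOn
  have : ∫ x, D θ v (t^2) x
      = (∫ x in Iic (-t), D θ v (t^2) x) + (∫ x in (-t)..t, D θ v (t^2) x)
        + ∫ x in Ioi t, D θ v (t^2) x := by
    rw [← hsplit1, ← hsplit2]
    ring
  rw [this, hIic, hMid, hIoi, hbt, hbt']
  ring


lemma pointwise_bound (hv : v ≠ 0) {t : ℝ} (ht : 0 < t) (x : ℝ) :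
    (max (1 - t^2 / x^2) 0 * x - θ)^2 * gaussianPDFReal θ v x
      ≤ (t^2 + 3*(v:ℝ)) * gaussianPDFReal θ v x + D θ v (t^2) x := by
  have hv' : (0:ℝ) < v := lt_of_le_of_ne v.coe_nonneg (by exact_mod_cast (Ne.symm hv))
  have hφ : 0 ≤ gaussianPDFReal θ v x := gaussianPDFReal_nonneg θ v x
  unfold D
  split_ifs with h
  · -- inner region
    have hF : max (1 - t^2 / x^2) 0 * x - θ = -θ := by
      rcases eq_or_ne x 0 with rfl | hx
      · simp
      · have hx2 : (0:ℝ) < x^2 := by positivity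
        have h1 : 1 - t^2/x^2 ≤ 0 := by
          rw [sub_nonpos, le_div_iff₀ hx2]
          linarith
        rw [max_eq_right h1, zero_mul, zero_sub]
    rw [hF]
    have hkey : (-θ)^2 ≤ (t^2 + 3*(v:ℝ)) + ((v:ℝ) - x^2 + θ^2) := by nlinarith
    calc (-θ)^2 * gaussianPDFReal θ v x
        ≤ ((t^2 + 3*(v:ℝ)) + ((v:ℝ) - x^2 + θ^2)) * gaussianPDFReal θ v x :=
          mul_le_mul_of_nonneg_right hkey hφ
      _ = (t^2 + 3*(v:ℝ)) * gaussianPDFReal θ v x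
          + ((v:ℝ) - x^2 + θ^2) * gaussianPDFReal θ v x := by ring
  · -- outer region
    push_neg at h
    have hx2 : (0:ℝ) < x^2 := lt_trans (by positivity) h
    have hx : x ≠ 0 := by
      intro h0
      rw [h0] at hx2
      simp at hx2
    have hmax : max (1 - t^2 / x^2) 0 = 1 - t^2/x^2 := by
      apply max_eq_left
      rw [sub_nonneg, div_le_one hx2]
      linarith
    rw [hmax]
    have e1 : (1 - t^2/x^2)*x - θ = (x - θ) - t^2/x := by
      field_simp
      ring
    rw [e1]
    have e2 : ((-(v:ℝ) + (x-θ)^2 - 2*t^2*(x-θ)/x - 2*(v:ℝ)*t^2/x^2) + (t^2 + 3*(v:ℝ)))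
        - ((x - θ) - t^2/x)^2 = (t^2 + 2*(v:ℝ)) * (1 - t^2/x^2) := by
      field_simp
      ring
    have e3 : (0:ℝ) ≤ (t^2 + 2*(v:ℝ)) * (1 - t^2/x^2) := by
      apply mul_nonneg (by positivity)
      rw [sub_nonneg, div_le_one hx2]
      linarith
    have hkey : ((x - θ) - t^2/x)^2
        ≤ (t^2 + 3*(v:ℝ)) + (-(v:ℝ) + (x-θ)^2 - 2*t^2*(x-θ)/x - 2*(v:ℝ)*t^2/x^2) := by
      linarith [e2 ▸ e3]
    calc ((x - θ) - t^2/x)^2 * gaussianPDFReal θ v x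
        ≤ ((t^2 + 3*(v:ℝ)) + (-(v:ℝ) + (x-θ)^2 - 2*t^2*(x-θ)/x - 2*(v:ℝ)*t^2/x^2))
            * gaussianPDFReal θ v x := mul_le_mul_of_nonneg_right hkey hφ
      _ = (t^2 + 3*(v:ℝ)) * gaussianPDFReal θ v x
          + (-(v:ℝ) + (x-θ)^2 - 2*t^2*(x-θ)/x - 2*(v:ℝ)*t^2/x^2) * gaussianPDFReal θ v x := by
            ring

end Stmt9Aux

/-- For `θ̃ ~ N(θ, s)` with `s = σ²/n > 0`, the garrotte estimator
`δ̂ = (1 - λ²σ²/θ̃²)₊ θ̃` with threshold `λσ > 0` satisfies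
`E(δ̂ - θ)² ≤ λ²σ² + 3 s`. -/
theorem stmt_9 (θ lam σ : ℝ) (hlam : 0 < lam) (hσ : 0 < σ) (n : ℕ) (hn : 1 ≤ n)
    (v : NNReal) (hv : (v : ℝ) = σ ^ 2 / n) :
    ∫ x, (max (1 - lam ^ 2 * σ ^ 2 / x ^ 2) 0 * x - θ) ^ 2 ∂(gaussianReal θ v)
      ≤ lam ^ 2 * σ ^ 2 + 3 * (σ ^ 2 / n) := by
  have hn' : (0:ℝ) < n := by exact_mod_cast hn
  have hvpos : (0:ℝ) < v := by
    rw [hv]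
    positivity
  have hv0 : v ≠ 0 := by
    intro h0
    rw [h0] at hvpos
    simp at hvpos
  set t : ℝ := lam * σ with htdef
  have ht : 0 < t := by positivity
  have hc : lam ^ 2 * σ ^ 2 = t^2 := by ring
  rw [hc, ← hv]
  -- rewrite the integral against the density
  have hmeasF : Measurable fun x : ℝ => (max (1 - t ^ 2 / x ^ 2) 0 * x - θ) ^ 2 := by
    fun_prop
  rw [gaussianReal_of_var_ne_zero θ hv0]
  have hpdf : gaussianPDF θ v = fun x => ((gaussianPDFReal θ v x).toNNReal : ℝ≥0∞) := rfl
  rw [hpdf]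
  rw [integral_withDensity_eq_integral_smul
    ((measurable_gaussianPDFReal θ v).real_toNNReal) _]
  have hsmul : ∀ x : ℝ, ((gaussianPDFReal θ v x).toNNReal : ℝ≥0)
      • ((max (1 - t ^ 2 / x ^ 2) 0 * x - θ) ^ 2)
      = (max (1 - t ^ 2 / x ^ 2) 0 * x - θ) ^ 2 * gaussianPDFReal θ v x := by
    intro x
    rw [NNReal.smul_def, Real.coe_toNNReal _ (gaussianPDFReal_nonneg θ v x), smul_eq_mul]
    ring
  rw [show (fun x => ((gaussianPDFReal θ v x).toNNReal : ℝ≥0)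
      • ((max (1 - t ^ 2 / x ^ 2) 0 * x - θ) ^ 2))
      = fun x => (max (1 - t ^ 2 / x ^ 2) 0 * x - θ) ^ 2 * gaussianPDFReal θ v x from
    funext hsmul]
  -- compare with the majorant
  have hG : Integrable (fun x : ℝ =>
      (t^2 + 3*(v:ℝ)) * gaussianPDFReal θ v x + Stmt9Aux.D θ v (t^2) x) :=
    (Stmt9Aux.integrable_gauss.const_mul _).add (Stmt9Aux.integrable_D hv0 ht)
  calc ∫ x, (max (1 - t ^ 2 / x ^ 2) 0 * x - θ) ^ 2 * gaussianPDFReal θ v x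
      ≤ ∫ x, ((t^2 + 3*(v:ℝ)) * gaussianPDFReal θ v x + Stmt9Aux.D θ v (t^2) x) := by
        apply integral_mono_of_nonneg
        · exact Filter.Eventually.of_forall fun x =>
            mul_nonneg (sq_nonneg _) (gaussianPDFReal_nonneg θ v x)
        · exact hG
        · exact Filter.Eventually.of_forall fun x => Stmt9Aux.pointwise_bound hv0 ht x
    _ = (t^2 + 3*(v:ℝ)) * ∫ x, gaussianPDFReal θ v x := by
        rw [integral_add (Stmt9Aux.integrable_gauss.const_mul _) (Stmt9Aux.integrable_D hv0 ht),
          Stmt9Aux.integral_D_eq_zero hv0 ht, integral_const_mul, add_zero]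
    _ = t^2 + 3*(v:ℝ) := by
        rw [integral_gaussianPDFReal_eq_one θ hv0, mul_one]
end

section
/- Let $\tilde\theta \sim N(\theta, s)$ with $s > 0$, and let $\hat\delta = (1 - \lambda^2\sigma^2/\tilde\theta^2)_+ \tilde\theta$ with $\lambda\sigma > 0$. Then $\mathbb{E}(\hat\delta - \theta)^2 \leq \theta^2 + 4s$. -/
open MeasureTheory ProbabilityTheory Real
open scoped NNReal ENNReal


lemma aux_integral_sq_exp {b : ℝ} (hb : 0 < b) :
    ∫ x : ℝ, x ^ 2 * Real.exp (-b * x ^ 2) = Real.sqrt Real.pi / 2 * b ^ (-(3:ℝ)/2) := by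
  have h1 : ∫ x : ℝ, x ^ 2 * Real.exp (-b * x ^ 2)
      = 2 * ∫ x in Set.Ioi (0:ℝ), x ^ 2 * Real.exp (-b * x ^ 2) := by
    rw [← integral_comp_abs (f := fun t => t ^ 2 * Real.exp (-b * t ^ 2))]
    simp [sq_abs]
  have h2 : ∫ x in Set.Ioi (0:ℝ), x ^ 2 * Real.exp (-b * x ^ 2)
      = b ^ (-(2+1:ℝ)/2) * (1/2) * Real.Gamma ((2+1)/2) := by
    rw [← integral_rpow_mul_exp_neg_mul_rpow two_pos (by norm_num : (-1:ℝ) < 2) hb]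
    refine setIntegral_congr_fun measurableSet_Ioi (fun x hx => ?_)
    rw [show ((2:ℝ)) = ((2:ℕ):ℝ) by norm_num, Real.rpow_natCast]

  have hG : Real.Gamma ((2+1)/2 : ℝ) = Real.sqrt Real.pi / 2 := by
    rw [show ((2+1)/2 : ℝ) = 1/2 + 1 by norm_num,
      Real.Gamma_add_one (by norm_num), Real.Gamma_one_half_eq]
    ring
  rw [h1, h2, hG]
  ring_nf

lemma aux_pdf_mul (v : NNReal) (hv : 0 < (v:ℝ)) (x : ℝ) :
    gaussianPDFReal 0 v x * x ^ 2
      = (Real.sqrt (2 * Real.pi * v))⁻¹ * (x ^ 2 * Real.exp (-(2*(v:ℝ))⁻¹ * x ^ 2)) := by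
  simp only [gaussianPDFReal_def]
  have : -(x - 0) ^ 2 / (2 * (v:ℝ)) = -(2*(v:ℝ))⁻¹ * x ^ 2 := by
    field_simp
    ring
  rw [this]; ring

lemma aux_gauss0_sq (v : NNReal) (hv : 0 < (v:ℝ)) :
    Integrable (fun x : ℝ => x ^ 2) (gaussianReal 0 v) ∧
    ∫ x, x ^ 2 ∂(gaussianReal 0 v) = (v:ℝ) := by
  have hv' : v ≠ 0 := fun h => by simp [h] at hv
  have hb : (0:ℝ) < (2*(v:ℝ))⁻¹ := by positivity
  have hmeas : Measurable fun x => Real.toNNReal (gaussianPDFReal 0 v x) :=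
    (measurable_gaussianPDFReal 0 v).real_toNNReal
  have hpdf : gaussianPDF 0 v = fun x => ((Real.toNNReal (gaussianPDFReal 0 v x) : ℝ≥0) : ℝ≥0∞) := rfl
  have hsmul : ∀ x : ℝ, (Real.toNNReal (gaussianPDFReal 0 v x)) • (x ^ 2)
      = gaussianPDFReal 0 v x * x ^ 2 := by
    intro x
    rw [NNReal.smul_def, Real.coe_toNNReal _ (gaussianPDFReal_nonneg 0 v x), smul_eq_mul]
  have hint : Integrable (fun x : ℝ => gaussianPDFReal 0 v x * x ^ 2) := by
    have := (integrable_rpow_mul_exp_neg_mul_sq hb (by norm_num : (-1:ℝ) < 2)).const_mul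
      ((Real.sqrt (2 * Real.pi * v))⁻¹)
    simp_rw [show ∀ x : ℝ, x ^ (2:ℝ) = x ^ 2 from fun x => by
      rw [show (2:ℝ)=((2:ℕ):ℝ) by norm_num, Real.rpow_natCast]] at this
    refine this.congr (Filter.Eventually.of_forall fun x => ?_)
    exact (aux_pdf_mul v hv x).symm
  constructor
  · rw [gaussianReal_of_var_ne_zero 0 hv', hpdf,
      integrable_withDensity_iff_integrable_smul hmeas]
    simpa only [hsmul] using hint
  · rw [gaussianReal_of_var_ne_zero 0 hv', hpdf,
      integral_withDensity_eq_integral_smul hmeas]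
    simp_rw [hsmul, aux_pdf_mul v hv]
    rw [integral_const_mul, aux_integral_sq_exp hb]
    have h2v : (0:ℝ) < 2 * (v:ℝ) := by positivity
    have h1 : ((2*(v:ℝ))⁻¹) ^ (-(3:ℝ)/2) = (2*(v:ℝ)) ^ ((3:ℝ)/2) := by
      rw [Real.inv_rpow h2v.le, show (-(3:ℝ)/2) = -((3:ℝ)/2) by norm_num,
        Real.rpow_neg h2v.le, inv_inv]
    have h2 : (2*(v:ℝ)) ^ ((3:ℝ)/2) = (2*(v:ℝ)) * Real.sqrt (2*(v:ℝ)) := by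
      rw [show ((3:ℝ)/2) = 1 + 1/2 by norm_num, Real.rpow_add h2v, Real.rpow_one,
        ← Real.sqrt_eq_rpow]
    have h3 : Real.sqrt (2*Real.pi*(v:ℝ)) = Real.sqrt (2*(v:ℝ)) * Real.sqrt Real.pi := by
      rw [← Real.sqrt_mul (by positivity : (0:ℝ) ≤ 2*(v:ℝ))]; ring_nf
    rw [h3, h1, h2]
    have hs : (0:ℝ) < Real.sqrt (2*(v:ℝ)) := Real.sqrt_pos.mpr h2v
    have hπ : (0:ℝ) < Real.sqrt Real.pi := Real.sqrt_pos.mpr Real.pi_pos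
    field_simp

/-- For `θ̃ ~ N(θ, s)` with `s > 0`, the garrotte estimator
`δ̂ = (1 - λ²σ²/θ̃²)₊ θ̃` with threshold `λσ > 0` satisfies
`E(δ̂ - θ)² ≤ θ² + 4 s`. -/
theorem stmt_10 (θ lam σ : ℝ) (hlam : 0 < lam) (hσ : 0 < σ)
    (v : NNReal) (hv : 0 < (v : ℝ)) :
    ∫ x, (max (1 - lam ^ 2 * σ ^ 2 / x ^ 2) 0 * x - θ) ^ 2 ∂(gaussianReal θ v)
      ≤ θ ^ 2 + 4 * (v : ℝ) := by
  obtain ⟨hint0, hval0⟩ := aux_gauss0_sq v hv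
  have hmap : (gaussianReal 0 v).map (· + θ) = gaussianReal θ v := by
    rw [gaussianReal_map_add_const, zero_add]
  have hmeas2 : ∀ μ : Measure ℝ, AEStronglyMeasurable (fun x : ℝ => (x - θ) ^ 2) μ :=
    fun μ => (by fun_prop : Measurable fun x : ℝ => (x - θ) ^ 2).aestronglyMeasurable
  have hintθ : Integrable (fun x : ℝ => (x - θ) ^ 2) (gaussianReal θ v) := by
    rw [← hmap, integrable_map_measure (hmeas2 _) (measurable_add_const θ).aemeasurable]
    have : ((fun x => (x - θ) ^ 2) ∘ fun x : ℝ => x + θ) = fun x : ℝ => x ^ 2 := by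
      funext x; simp
    rw [this]; exact hint0
  have hvalθ : ∫ x, (x - θ) ^ 2 ∂(gaussianReal θ v) = (v : ℝ) := by
    rw [← hmap, integral_map (measurable_add_const θ).aemeasurable (hmeas2 _)]
    simpa using hval0
  have key : ∀ x : ℝ, (max (1 - lam ^ 2 * σ ^ 2 / x ^ 2) 0 * x - θ) ^ 2
      ≤ θ ^ 2 + (x - θ) ^ 2 := by
    intro x
    set m := max (1 - lam ^ 2 * σ ^ 2 / x ^ 2) 0 with hm
    have hm0 : 0 ≤ m := le_max_right _ _
    have hm1 : m ≤ 1 := by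
      apply max_le _ zero_le_one
      have : (0:ℝ) ≤ lam ^ 2 * σ ^ 2 / x ^ 2 :=
        div_nonneg (by positivity) (sq_nonneg x)
      linarith
    nlinarith [sq_nonneg (θ - x * (1 - m)),
      mul_nonneg (mul_nonneg (sq_nonneg x) (sub_nonneg.mpr hm1)) hm0]
  have hg : Integrable (fun x : ℝ => θ ^ 2 + (x - θ) ^ 2) (gaussianReal θ v) :=
    (integrable_const _).add hintθ
  calc ∫ x, (max (1 - lam ^ 2 * σ ^ 2 / x ^ 2) 0 * x - θ) ^ 2 ∂(gaussianReal θ v)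
      ≤ ∫ x, (θ ^ 2 + (x - θ) ^ 2) ∂(gaussianReal θ v) :=
        integral_mono_of_nonneg (Filter.Eventually.of_forall fun x => sq_nonneg _) hg
          (Filter.Eventually.of_forall key)
    _ = θ ^ 2 + (v : ℝ) := by
        rw [integral_add (integrable_const _) hintθ, hvalθ, integral_const]
        simp
    _ ≤ θ ^ 2 + 4 * (v : ℝ) := by linarith
end

section
/- Let $Z \sim N(\mu, 1)$ and $\tau > 0$. Then $\mathbb{P}(|Z| > \tau) \leq \frac{2\phi(\tau)}{\tau} + \frac{\mu^2}{4}$, where $\phi$ is the standard normal density. -/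
open MeasureTheory ProbabilityTheory Real Set

noncomputable def sphi (x : ℝ) : ℝ := (Real.sqrt (2 * Real.pi))⁻¹ * Real.exp (-x ^ 2 / 2)

lemma sphi_eq_pdf (s x : ℝ) : gaussianPDFReal s 1 x = sphi (x - s) := by
  simp [gaussianPDFReal, sphi]

lemma sphi_even (x : ℝ) : sphi (-x) = sphi x := by simp [sphi]

lemma sphi_nonneg (x : ℝ) : 0 ≤ sphi x :=
  mul_nonneg (inv_nonneg.mpr (Real.sqrt_nonneg _)) (Real.exp_nonneg _)

lemma sphi_continuous : Continuous sphi := by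
  unfold sphi; fun_prop

lemma sphi_integrable : Integrable sphi := by
  have := integrable_gaussianPDFReal 0 1
  simpa [funext fun x => sphi_eq_pdf 0 x] using this

lemma sphi_integral_one : ∫ x, sphi x = 1 := by
  have := integral_gaussianPDFReal_eq_one 0 one_ne_zero
  simpa [funext fun x => sphi_eq_pdf 0 x] using this

lemma sphi_hasDerivAt (t : ℝ) : HasDerivAt sphi (-t * sphi t) t := by
  have h1 : HasDerivAt (fun x : ℝ => -x ^ 2 / 2) (-t) t := by
    have := ((hasDerivAt_pow 2 t).neg).div_const 2
    simpa using this.congr_deriv (by ring)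
  have h2 := (h1.exp).const_mul (Real.sqrt (2 * Real.pi))⁻¹
  have : HasDerivAt sphi ((Real.sqrt (2 * Real.pi))⁻¹ * (Real.exp (-t^2/2) * -t)) t := h2
  exact this.congr_deriv (by simp only [sphi]; ring)

lemma abs_mul_exp_le (t : ℝ) : |t| * Real.exp (-t ^ 2 / 2) ≤ Real.exp (-(1:ℝ) / 2) := by
  have h1 : |t| ≤ Real.exp ((t ^ 2 - 1) / 2) := by
    have := Real.add_one_le_exp ((t ^ 2 - 1) / 2)
    nlinarith [sq_nonneg (|t| - 1), sq_abs t]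
  calc |t| * Real.exp (-t ^ 2 / 2) ≤ Real.exp ((t ^ 2 - 1) / 2) * Real.exp (-t ^ 2 / 2) :=
        mul_le_mul_of_nonneg_right h1 (Real.exp_nonneg _)
    _ = Real.exp (-(1:ℝ) / 2) := by rw [← Real.exp_add]; ring_nf

lemma exp_half_bound : Real.exp (-(1:ℝ) / 2) / Real.sqrt (2 * Real.pi) ≤ 1 / 4 := by
  rw [div_le_div_iff₀ (Real.sqrt_pos.mpr (by positivity)) (by norm_num)]
  have key : (Real.exp (-(1:ℝ)/2) * 4) ^ 2 ≤ 2 * Real.pi := by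
    have he : Real.exp (-(1:ℝ)/2) ^ 2 = Real.exp (-1) := by
      rw [← Real.exp_nat_mul]; norm_num
    have h2 : Real.exp (-1 : ℝ) * Real.exp 1 = 1 := by rw [← Real.exp_add]; norm_num
    nlinarith [Real.exp_one_gt_d9, Real.pi_gt_d6, Real.exp_pos (-1:ℝ),
      mul_pos (Real.exp_pos (-1:ℝ)) (Real.exp_pos 1)]
  calc Real.exp (-(1:ℝ)/2) * 4 = Real.sqrt ((Real.exp (-(1:ℝ)/2) * 4) ^ 2) :=
        (Real.sqrt_sq (by positivity)).symm
    _ ≤ Real.sqrt (2 * Real.pi) := Real.sqrt_le_sqrt key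
    _ = 1 * Real.sqrt (2 * Real.pi) := (one_mul _).symm

lemma deriv_bound (t : ℝ) : |(-t * sphi t)| ≤ 1 / 4 := by
  have h := abs_mul_exp_le t
  have hs : (0:ℝ) < Real.sqrt (2 * Real.pi) := Real.sqrt_pos.mpr (by positivity)
  have heq : |(-t * sphi t)| = (|t| * Real.exp (-t^2/2)) / Real.sqrt (2 * Real.pi) := by
    rw [abs_mul, abs_neg]
    simp only [sphi]
    rw [abs_mul, abs_of_nonneg (Real.exp_nonneg _), abs_inv, abs_of_nonneg hs.le]
    ring
  rw [heq]
  calc (|t| * Real.exp (-t^2/2)) / Real.sqrt (2 * Real.pi)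
      ≤ Real.exp (-(1:ℝ)/2) / Real.sqrt (2 * Real.pi) := by gcongr
    _ ≤ 1/4 := exp_half_bound

lemma sphi_lipschitz_aux {a b : ℝ} (hab : b < a) : |sphi a - sphi b| ≤ |a - b| / 4 := by
  obtain ⟨c, _, hc⟩ := exists_hasDerivAt_eq_slope sphi (fun t => -t * sphi t) hab
    (sphi_continuous.continuousOn) (fun x _ => sphi_hasDerivAt x)
  have hne : a - b ≠ 0 := by linarith
  have : sphi a - sphi b = (-c * sphi c) * (a - b) := by
    field_simp at hc; linarith [hc]
  rw [this, abs_mul]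
  calc |(-c * sphi c)| * |a - b| ≤ (1/4) * |a - b| :=
    mul_le_mul_of_nonneg_right (deriv_bound c) (abs_nonneg _)
    _ = |a - b| / 4 := by ring

lemma sphi_lipschitz (a b : ℝ) : |sphi a - sphi b| ≤ |a - b| / 4 := by
  rcases lt_trichotomy b a with h | rfl | h
  · exact sphi_lipschitz_aux h
  · simp
  · have := sphi_lipschitz_aux h
    rwa [abs_sub_comm (sphi b), abs_sub_comm b] at this

noncomputable def sC (t : ℝ) : ℝ := ∫ u in (0:ℝ)..t, sphi u

lemma sC_hasDerivAt (t : ℝ) : HasDerivAt sC (sphi t) t :=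
  intervalIntegral.integral_hasDerivAt_right (sphi_integrable.intervalIntegrable)
    (sphi_continuous.stronglyMeasurable.stronglyMeasurableAtFilter)
    sphi_continuous.continuousAt

lemma sC_sub (a b : ℝ) : sC b - sC a = ∫ u in a..b, sphi u :=
  intervalIntegral.integral_interval_sub_left
    sphi_integrable.intervalIntegrable sphi_integrable.intervalIntegrable

noncomputable def sF (τ s : ℝ) : ℝ := sC (τ - s) - sC (-τ - s)

lemma sF_hasDerivAt (τ s : ℝ) :
    HasDerivAt (sF τ) (sphi (τ + s) - sphi (τ - s)) s := by
  have hin1 : HasDerivAt (fun s : ℝ => τ - s) (-1) s := by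
    simpa using (hasDerivAt_id s).const_sub τ
  have hin2 : HasDerivAt (fun s : ℝ => -τ - s) (-1) s := by
    simpa using (hasDerivAt_id s).const_sub (-τ)
  have h1 := (sC_hasDerivAt (τ - s)).comp s hin1
  have h2 := (sC_hasDerivAt (-τ - s)).comp s hin2
  have := h1.sub h2
  have heq : sphi (τ - s) * -1 - sphi (-τ - s) * -1 = sphi (τ + s) - sphi (τ - s) := by
    have : sphi (-τ - s) = sphi (τ + s) := by
      rw [show -τ - s = -(τ + s) by ring, sphi_even]
    rw [this]; ring
  exact (this.congr_deriv heq)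

noncomputable def sG (τ s : ℝ) : ℝ := sF τ s + sF τ (-s) - 2 * sF τ 0 + s ^ 2 / 2

lemma sG_hasDerivAt (τ s : ℝ) :
    HasDerivAt (sG τ) (2 * (sphi (τ + s) - sphi (τ - s)) + s) s := by
  have h1 := sF_hasDerivAt τ s
  have hneg : HasDerivAt (fun s : ℝ => sF τ (-s))
      (-(sphi (τ + -s) - sphi (τ - -s))) s := by
    have := (sF_hasDerivAt τ (-s)).comp s (hasDerivAt_neg s)
    simpa [mul_comm, Function.comp_def] using this
  have h := ((h1.add hneg).sub_const (2 * sF τ 0)).add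
    ((hasDerivAt_pow 2 s).div_const 2)
  have : HasDerivAt (sG τ)
      ((sphi (τ + s) - sphi (τ - s)) + -(sphi (τ + -s) - sphi (τ - -s))
        + (2 : ℕ) * s ^ 1 / 2) s := h
  apply this.congr_deriv
  have e1 : sphi (τ - -s) = sphi (τ + s) := by ring_nf
  have e2 : sphi (τ + -s) = sphi (τ - s) := by ring_nf
  rw [e1, e2]; push_cast; ring

lemma sG_nonneg (τ : ℝ) {s : ℝ} (hs : 0 ≤ s) : 0 ≤ sG τ s := by
  have hd : ∀ x, DifferentiableAt ℝ (sG τ) x := fun x => (sG_hasDerivAt τ x).differentiableAt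
  have hderiv : ∀ x, deriv (sG τ) x = 2 * (sphi (τ + x) - sphi (τ - x)) + x :=
    fun x => (sG_hasDerivAt τ x).deriv
  have hmono : MonotoneOn (sG τ) (Ici 0) := by
    apply monotoneOn_of_deriv_nonneg (convex_Ici 0)
      (fun x _ => (hd x).continuousAt.continuousWithinAt)
      (fun x _ => (hd x).differentiableWithinAt)
    intro x hx
    rw [interior_Ici] at hx
    rw [hderiv]
    have hlip := sphi_lipschitz (τ - x) (τ + x)
    have : |τ - x - (τ + x)| = 2 * x := by
      rw [show τ - x - (τ + x) = -(2*x) by ring, abs_neg, abs_of_nonneg (by linarith [hx.out])]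
    rw [this] at hlip
    have h2 : sphi (τ - x) - sphi (τ + x) ≤ 2 * x / 4 :=
      le_trans (le_abs_self _) hlip
    linarith
  have h0 : sG τ 0 = 0 := by simp [sG]; ring
  have := hmono (self_mem_Ici) hs hs
  rwa [h0] at this

lemma sphi_tendsto_zero : Filter.Tendsto sphi Filter.atTop (nhds 0) := by
  have h1 : Filter.Tendsto (fun x : ℝ => -x ^ 2 / 2) Filter.atTop Filter.atBot := by
    apply Filter.Tendsto.atBot_div_const (by norm_num)
    exact Filter.tendsto_neg_atBot_iff.mpr (Filter.tendsto_pow_atTop (by norm_num))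
  have := Real.tendsto_exp_atBot.comp h1
  have h2 := this.const_mul (Real.sqrt (2 * Real.pi))⁻¹
  have heq : sphi = fun x : ℝ => (Real.sqrt (2 * Real.pi))⁻¹ * Real.exp (-x ^ 2 / 2) := rfl
  rw [heq]
  simpa [Function.comp] using h2

lemma id_mul_sphi_integrableOn (τ : ℝ) : IntegrableOn (fun x => x * sphi x) (Ioi τ) := by
  have h := (integrable_mul_exp_neg_mul_sq (b := 1/2) (by norm_num)).const_mul
    (Real.sqrt (2 * Real.pi))⁻¹
  have heq : (fun x : ℝ => (Real.sqrt (2 * Real.pi))⁻¹ * (x * Real.exp (-(1/2) * x ^ 2)))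
      = fun x => x * sphi x := by
    funext x; simp only [sphi]; ring_nf
  rw [heq] at h
  exact h.integrableOn

lemma integral_id_mul_sphi (τ : ℝ) : ∫ x in Ioi τ, x * sphi x = sphi τ := by
  have hderiv : ∀ x ∈ Ici τ, HasDerivAt (fun y => -sphi y) (x * sphi x) x := by
    intro x _
    have := (sphi_hasDerivAt x).neg
    exact this.congr_deriv (by ring)
  have htend : Filter.Tendsto (fun y => -sphi y) Filter.atTop (nhds 0) := by
    simpa using sphi_tendsto_zero.neg
  have := integral_Ioi_of_hasDerivAt_of_tendsto' hderiv (id_mul_sphi_integrableOn τ) htend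
  simpa using this

lemma mills (τ : ℝ) (hτ : 0 < τ) : ∫ x in Ioi τ, sphi x ≤ sphi τ / τ := by
  have hmono : ∫ x in Ioi τ, sphi x ≤ ∫ x in Ioi τ, τ⁻¹ * (x * sphi x) := by
    apply setIntegral_mono_on sphi_integrable.integrableOn
      ((id_mul_sphi_integrableOn τ).const_mul _) measurableSet_Ioi
    intro x hx
    have hx' : τ < x := hx
    have h1 : 1 ≤ τ⁻¹ * x := by
      rw [inv_mul_eq_div, le_div_iff₀ hτ]; linarith
    calc sphi x = 1 * sphi x := (one_mul _).symm
      _ ≤ (τ⁻¹ * x) * sphi x := mul_le_mul_of_nonneg_right h1 (sphi_nonneg x)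
      _ = τ⁻¹ * (x * sphi x) := by ring
  rw [MeasureTheory.integral_const_mul, integral_id_mul_sphi] at hmono
  rw [div_eq_inv_mul]
  exact hmono

section Main
variable (m τ : ℝ)

lemma shift_integrable (s : ℝ) : Integrable (fun x => sphi (x - s)) := by
  have := integrable_gaussianPDFReal s 1
  simpa [funext fun x => sphi_eq_pdf s x] using this

lemma S_eq : {x : ℝ | τ < |x|} = Ioi τ ∪ Iio (-τ) := by
  ext x
  simp only [mem_setOf_eq, mem_union, mem_Ioi, mem_Iio, lt_abs]
  constructor
  · rintro (h | h); exacts [Or.inl h, Or.inr (by linarith)]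
  · rintro (h | h); exacts [Or.inl h, Or.inr (by linarith)]

lemma Sc_eq : {x : ℝ | τ < |x|}ᶜ = Icc (-τ) τ := by
  ext x
  simp only [mem_compl_iff, mem_setOf_eq, not_lt, mem_Icc, abs_le]

lemma S_meas : MeasurableSet {x : ℝ | τ < |x|} :=
  measurableSet_lt measurable_const measurable_id.abs

-- complement formula : ∫ over S of sphi(x-s) = 1 - sF τ s
lemma r_eq (hτ : 0 < τ) (s : ℝ) :
    ∫ x in {x : ℝ | τ < |x|}, sphi (x - s) = 1 - sF τ s := by
  have htot : (∫ x in {x : ℝ | τ < |x|}, sphi (x - s))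
      + ∫ x in {x : ℝ | τ < |x|}ᶜ, sphi (x - s) = 1 := by
    rw [integral_add_compl (S_meas τ) (shift_integrable s)]
    have := integral_gaussianPDFReal_eq_one s one_ne_zero
    simpa [funext fun x => sphi_eq_pdf s x] using this
  have hcompl : ∫ x in {x : ℝ | τ < |x|}ᶜ, sphi (x - s) = sF τ s := by
    rw [Sc_eq, integral_Icc_eq_integral_Ioc,
      ← intervalIntegral.integral_of_le (by linarith : -τ ≤ τ)]
    rw [intervalIntegral.integral_comp_sub_right (fun u => sphi u) s]
    rw [sF, sC_sub]
  linarith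

-- symmetry: r m = r (-m)
lemma r_symm : ∫ x in {x : ℝ | τ < |x|}, sphi (x - m)
    = ∫ x in {x : ℝ | τ < |x|}, sphi (x + m) := by
  set S := {x : ℝ | τ < |x|}
  have hSm : ∀ x : ℝ, (-x ∈ S) = (x ∈ S) := by
    intro x; simp [S, abs_neg]
  rw [← integral_indicator (S_meas τ), ← integral_indicator (S_meas τ)]
  rw [← integral_neg_eq_self (S.indicator fun y => sphi (y - m))]
  congr 1
  funext x
  by_cases hx : x ∈ S
  · rw [indicator_of_mem (by rw [hSm]; exact hx), indicator_of_mem hx]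
    rw [show -x - m = -(x + m) by ring, sphi_even]
  · rw [indicator_of_notMem (by rw [hSm]; exact hx), indicator_of_notMem hx]

lemma r_zero_le (hτ : 0 < τ) :
    ∫ x in {x : ℝ | τ < |x|}, sphi x ≤ 2 * sphi τ / τ := by
  rw [S_eq]
  have hdisj : Disjoint (Ioi τ) (Iio (-τ)) := by
    rw [Set.disjoint_left]
    intro x hx hx'
    simp only [mem_Ioi, mem_Iio] at hx hx'
    linarith
  have hrefl : ∫ x in Iio (-τ), sphi x = ∫ x in Ioi τ, sphi x := by
    rw [← integral_Iic_eq_integral_Iio, ← integral_comp_neg_Ioi]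
    simp only [sphi_even]
  have hm := mills τ hτ
  calc ∫ x in Ioi τ ∪ Iio (-τ), sphi x
      = (∫ x in Ioi τ, sphi x) + ∫ x in Iio (-τ), sphi x :=
        setIntegral_union hdisj measurableSet_Iio
          sphi_integrable.integrableOn sphi_integrable.integrableOn
    _ = (∫ x in Ioi τ, sphi x) + ∫ x in Ioi τ, sphi x := by rw [hrefl]
    _ ≤ sphi τ / τ + sphi τ / τ := add_le_add hm hm
    _ = 2 * sphi τ / τ := by ring

/-- For `Z ~ N(μ, 1)` and `τ > 0`, `P(|Z| > τ) ≤ 2 φ(τ)/τ + μ²/4`, where `φ` is the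
standard normal density. -/
theorem stmt_11 (m τ : ℝ) (hτ : 0 < τ) :
    gaussianReal m 1 {x | τ < |x|}
      ≤ ENNReal.ofReal
          (2 * (Real.exp (-τ ^ 2 / 2) / Real.sqrt (2 * Real.pi)) / τ + m ^ 2 / 4) := by
  rw [gaussianReal_apply_eq_integral m one_ne_zero]
  apply ENNReal.ofReal_le_ofReal
  have hpdf : ∫ x in {x : ℝ | τ < |x|}, gaussianPDFReal m 1 x
      = ∫ x in {x : ℝ | τ < |x|}, sphi (x - m) := by
    congr 1; funext x; exact sphi_eq_pdf m x
  rw [hpdf]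
  -- r m = (r m + r (-m))/2 = 1 - (F m + F (-m))/2
  have h1 : ∫ x in {x : ℝ | τ < |x|}, sphi (x - m) = 1 - (sF τ m + sF τ (-m)) / 2 := by
    have ha := r_eq τ hτ m
    have hb := r_eq τ hτ (-m)
    have hc := r_symm m τ
    have : (fun x => sphi (x + m)) = fun x => sphi (x - -m) := by funext x; ring_nf
    rw [this] at hc
    linarith
  rw [h1]
  -- F m + F (-m) ≥ 2 F 0 - m^2/2
  have h2 : 2 * sF τ 0 - m ^ 2 / 2 ≤ sF τ m + sF τ (-m) := by
    have := sG_nonneg τ (abs_nonneg m)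
    rw [sG] at this
    have hsq : |m| ^ 2 = m ^ 2 := sq_abs m
    rcases abs_cases m with ⟨h, _⟩ | ⟨h, _⟩ <;> rw [h] at this <;> [skip; rw [neg_neg] at this] <;> nlinarith [this]
  have h3 : 1 - sF τ 0 ≤ 2 * sphi τ / τ := by
    have := r_eq τ hτ 0
    have h0 : (fun x => sphi (x - 0)) = sphi := by funext x; rw [sub_zero]
    rw [h0] at this
    have := r_zero_le τ hτ
    linarith [r_eq τ hτ 0, r_zero_le τ hτ]
  have hrhs : 2 * (Real.exp (-τ ^ 2 / 2) / Real.sqrt (2 * Real.pi)) / τ = 2 * sphi τ / τ := by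
    rw [sphi]; ring
  rw [hrhs]
  linarith
end Main
end
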